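/- Let k ≥ 4, k₀ = ⌊√k⌋, and fix positive integers n₁ < ⋯ < n_{k₀} with ∑_{1 ≤ j < j' ≤ k₀} n_j / n_{j'} < 2^{-k}. For m, n ∈ ℕ and 1 ≤ l ≤ m, let R_{n k₀^{m-l}, l} be the Rademacher resolutions (with weights w_{j k₀} = 1/k₀ for j = 1,…,k₀ and w_j = 0 otherwise). Then the resolutions R_{n k₀^{m-l}, l}, l = 1,…,m, are pairwise 5/k₀-orthogonal, and ⟨R_{n k₀^{m-l}, l}, R_{n k₀^{m-l}, l}⟩ ≤ 1 + 2/k₀ for each l. -/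

import Mathlib

noncomputable section

/-- A resolution, presented as a finite list of (colour, coefficient) pairs. -/
abbrev Res := List (ℕ × ℝ)

/-- Given placements `l, m` of the supports of representations `(x, x*)` of `r` and
`(y, y*)` of `s`, the value `x*(y) = ∑ᵢ x*(i)·y(i)`. -/
def pairSum (r s : Res) (l : Fin r.length → ℕ) (m : Fin s.length → ℕ) : ℝ :=
  ∑ u : Fin r.length, ∑ v : Fin s.length,
    if l u = m v then
      (2 : ℝ) ^ ((r.get u).1) * (r.get u).2 * (2 : ℝ) ^ (-((s.get v).1 : ℤ))
    else 0

/-- `[r, s]`: the supremum of `x*(y)` over all representations. -/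
def bra (r s : Res) : ℝ :=
  sSup {t | ∃ (l : Fin r.length → ℕ) (m : Fin s.length → ℕ),
    StrictMono l ∧ StrictMono m ∧ t = pairSum r s l m}

/-- `⟨r, s⟩ = max([r,s], [s,r])`. -/
def angled (r s : Res) : ℝ := max (bra r s) (bra s r)

/-- `R_n`: colour `j·k₀` repeated `n·n_j` times for `j = 1,…,k₀` (in increasing order of
`j`), with coefficient `1/(n·n_j·k₀)` at every coordinate of colour `j·k₀`. -/
def RadBase (k₀ : ℕ) (nn : ℕ → ℕ) (n : ℕ) : Res :=
  (List.range k₀).flatMap fun j =>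
    List.replicate (n * nn (j + 1))
      ((j + 1) * k₀, 1 / ((n : ℝ) * (nn (j + 1) : ℝ) * (k₀ : ℝ)))

/-- `(r,…,r)_m`: concatenation of `m` copies of `r`, coefficients divided by `m`. -/
def repRes (m : ℕ) (r : Res) : Res :=
  (List.replicate m (r.map fun p => (p.1, p.2 / (m : ℝ)))).flatten

/-- The Rademacher resolution `R_{n,l} = (R_n,…,R_n)_{k₀^{l-1}}`. -/
def Rademacher (k₀ : ℕ) (nn : ℕ → ℕ) (n l : ℕ) : Res :=
  repRes (k₀ ^ (l - 1)) (RadBase k₀ nn n)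

namespace RadProof

def SP (nn : ℕ → ℕ) (N j : ℕ) : ℕ := ∑ i ∈ Finset.range j, N * nn (i + 1)

def JJ (k₀ : ℕ) (nn : ℕ → ℕ) (N p : ℕ) : ℕ :=
  ((Finset.range k₀).filter fun j => SP nn N (j + 1) ≤ p).card

lemma SP_mono (nn : ℕ → ℕ) (N : ℕ) {a b : ℕ} (h : a ≤ b) : SP nn N a ≤ SP nn N b :=
  Finset.sum_le_sum_of_subset (Finset.range_subset_range.2 h)

lemma SP_succ (nn : ℕ → ℕ) (N j : ℕ) : SP nn N (j+1) = SP nn N j + N * nn (j+1) :=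
  Finset.sum_range_succ _ _

lemma JJ_lt {k₀ : ℕ} (hk₀ : 0 < k₀) (nn : ℕ → ℕ) (N p : ℕ) (hp : p < SP nn N k₀) :
    JJ k₀ nn N p < k₀ := by
  have hsub : ((Finset.range k₀).filter fun j => SP nn N (j + 1) ≤ p)
      ⊆ (Finset.range k₀).erase (k₀ - 1) := by
    intro j hj
    rw [Finset.mem_filter] at hj
    rw [Finset.mem_erase]
    refine ⟨?_, hj.1⟩
    rintro rfl
    have h1 : k₀ - 1 + 1 = k₀ := by omega
    rw [h1] at hj
    omega
  have := Finset.card_le_card hsub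
  rw [Finset.card_erase_of_mem (by simp; omega), Finset.card_range] at this
  unfold JJ
  omega

lemma SP_JJ_le (k₀ : ℕ) (nn : ℕ → ℕ) (N p : ℕ) : SP nn N (JJ k₀ nn N p) ≤ p := by
  set t := (Finset.range k₀).filter fun j => SP nn N (j + 1) ≤ p with ht
  by_cases h : t.Nonempty
  · have ha : SP nn N (t.max' h + 1) ≤ p := (Finset.mem_filter.mp (t.max'_mem h)).2
    have hcard : t.card ≤ t.max' h + 1 := by
      have hsub : t ⊆ Finset.range (t.max' h + 1) := by
        intro j hj
        rw [Finset.mem_range]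
        exact Nat.lt_succ_of_le (Finset.le_max' t j hj)
      simpa using Finset.card_le_card hsub
    exact le_trans (SP_mono nn N hcard) ha
  · rw [Finset.not_nonempty_iff_eq_empty] at h
    have h0 : JJ k₀ nn N p = 0 := by rw [JJ, ← ht, h]; simp
    rw [h0]
    simp [SP]

lemma lt_SP_JJ {k₀ : ℕ} (hk₀ : 0 < k₀) (nn : ℕ → ℕ) (N p : ℕ) (hp : p < SP nn N k₀) :
    p < SP nn N (JJ k₀ nn N p + 1) := by
  by_contra h
  push_neg at h
  have hJ : JJ k₀ nn N p < k₀ := JJ_lt hk₀ nn N p hp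
  have hsub : Finset.range (JJ k₀ nn N p + 1)
      ⊆ (Finset.range k₀).filter fun j => SP nn N (j + 1) ≤ p := by
    intro j hj
    rw [Finset.mem_range] at hj
    rw [Finset.mem_filter, Finset.mem_range]
    exact ⟨by omega, le_trans (SP_mono nn N (by omega)) h⟩
  have := Finset.card_le_card hsub
  rw [Finset.card_range] at this
  unfold JJ at this hJ
  omega

/-! ### list structure lemmas -/

lemma length_fmrep {α : Type*} (c : ℕ → ℕ) (f : ℕ → α) (K : ℕ) :
    ((List.range K).flatMap fun j => List.replicate (c j) (f j)).length
      = ∑ j ∈ Finset.range K, c j := by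
  induction K with
  | zero => simp
  | succ K ih =>
      rw [List.range_succ, List.flatMap_append, List.length_append, ih,
        Finset.sum_range_succ]
      simp

lemma getElem?_fmrep {α : Type*} (c : ℕ → ℕ) (f : ℕ → α) (K p : ℕ)
    (hp : p < ∑ j ∈ Finset.range K, c j) :
    ((List.range K).flatMap fun j => List.replicate (c j) (f j))[p]?
      = some (f (((Finset.range K).filter fun j => (∑ i ∈ Finset.range (j+1), c i) ≤ p).card)) := by
  induction K with
  | zero => simp at hp
  | succ K ih =>
    have hlist : (List.range (K+1)).flatMap (fun j => List.replicate (c j) (f j))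
        = ((List.range K).flatMap fun j => List.replicate (c j) (f j))
          ++ List.replicate (c K) (f K) := by
      rw [List.range_succ, List.flatMap_append]
      simp
    rw [hlist]
    rcases lt_or_ge p (∑ j ∈ Finset.range K, c j) with h | h
    · rw [List.getElem?_append_left (by rw [length_fmrep]; exact h), ih h]
      congr 3
      rw [Finset.range_add_one, Finset.filter_insert, if_neg (by omega)]
    · rw [List.getElem?_append_right (by rw [length_fmrep]; exact h), length_fmrep,
        List.getElem?_replicate, if_pos (by rw [Finset.sum_range_succ] at hp; omega)]
      congr 2
      have heq : ((Finset.range (K+1)).filter fun j => (∑ i ∈ Finset.range (j+1), c i) ≤ p)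
          = Finset.range K := by
        ext j
        rw [Finset.mem_filter, Finset.mem_range, Finset.mem_range]
        constructor
        · rintro ⟨hj, hle⟩
          by_contra hc
          have hjK : j = K := by omega
          subst hjK
          rw [Finset.sum_range_succ] at hle hp
          omega
        · intro hj
          refine ⟨by omega, ?_⟩
          calc (∑ i ∈ Finset.range (j+1), c i) ≤ ∑ i ∈ Finset.range K, c i :=
                Finset.sum_le_sum_of_subset (Finset.range_subset_range.2 (by omega))
            _ ≤ p := h
      rw [heq, Finset.card_range]

lemma length_flatrep {α : Type*} (L : List α) (M : ℕ) :
    (List.replicate M L).flatten.length = M * L.length := by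
  induction M with
  | zero => simp
  | succ M ih => rw [List.replicate_succ, List.flatten_cons, List.length_append, ih]; ring

lemma getElem?_flatrep {α : Type*} (L : List α) (M i : ℕ) (h : i < M * L.length) :
    (List.replicate M L).flatten[i]? = L[i % L.length]? := by
  induction M generalizing i with
  | zero => omega
  | succ M ih =>
    rw [List.replicate_succ, List.flatten_cons]
    rcases lt_or_ge i L.length with h1 | h1
    · rw [List.getElem?_append_left h1, Nat.mod_eq_of_lt h1]
    · rw [Nat.succ_mul] at h
      rw [List.getElem?_append_right h1, ih _ (by omega), Nat.mod_eq_sub_mod h1]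

/-! ### Rademacher structure -/

lemma RadM_length (k₀ : ℕ) (nn : ℕ → ℕ) (N M : ℕ) :
    (repRes M (RadBase k₀ nn N)).length = M * SP nn N k₀ := by
  rw [repRes, length_flatrep, List.length_map, RadBase, length_fmrep]
  rfl

lemma RadBase_getElem? (k₀ : ℕ) (nn : ℕ → ℕ) (N p : ℕ) (hp : p < SP nn N k₀) :
    (RadBase k₀ nn N)[p]?
      = some ((JJ k₀ nn N p + 1) * k₀,
          1 / ((N : ℝ) * (nn (JJ k₀ nn N p + 1) : ℝ) * (k₀ : ℝ))) := by
  rw [RadBase, getElem?_fmrep _ _ _ _ (by exact hp)]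
  rfl

lemma RadM_getElem (k₀ : ℕ) (nn : ℕ → ℕ) (N M i : ℕ)
    (h : i < (repRes M (RadBase k₀ nn N)).length) :
    (repRes M (RadBase k₀ nn N))[i]
      = ((JJ k₀ nn N (i % SP nn N k₀) + 1) * k₀,
          1 / (((M * N : ℕ) : ℝ) * (nn (JJ k₀ nn N (i % SP nn N k₀) + 1) : ℝ) * (k₀ : ℝ))) := by
  have h' : i < M * SP nn N k₀ := by rwa [RadM_length] at h
  have hB : 0 < SP nn N k₀ := by rcases Nat.eq_zero_or_pos (SP nn N k₀) with h0|h0 <;> [skip; exact h0]; rw [h0] at h'; omega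
  have hmod : i % SP nn N k₀ < SP nn N k₀ := Nat.mod_lt _ hB
  have hopt : (repRes M (RadBase k₀ nn N))[i]?
      = some ((JJ k₀ nn N (i % SP nn N k₀) + 1) * k₀,
          1 / (((M * N : ℕ) : ℝ) * (nn (JJ k₀ nn N (i % SP nn N k₀) + 1) : ℝ) * (k₀ : ℝ))) := by
    rw [repRes, getElem?_flatrep _ _ _ (by rw [List.length_map, (by rfl : (RadBase k₀ nn N).length = ((List.range k₀).flatMap fun j => List.replicate (N * nn (j+1)) (((j + 1) * k₀, 1 / ((N : ℝ) * (nn (j + 1) : ℝ) * (k₀ : ℝ))))).length), length_fmrep]; exact h'),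
      List.length_map]
    have hlen : (RadBase k₀ nn N).length = SP nn N k₀ := by
      rw [RadBase, length_fmrep]; rfl
    rw [hlen, List.getElem?_map, RadBase_getElem? k₀ nn N _ hmod]
    rw [Option.map_some]
    congr 2
    push_cast
    rw [div_div]
    congr 1
    ring
  rw [List.getElem?_eq_getElem h] at hopt
  exact Option.some_injective _ hopt
/-! ### counting lemmas -/

lemma count_bc (k₀ : ℕ) (hk₀ : 0 < k₀) (nn : ℕ → ℕ) (N L : ℕ)
    (hB : 0 < SP nn N k₀) (b j : ℕ) :
    ((Finset.univ : Finset (Fin L)).filter fun v : Fin L =>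
        (v : ℕ) / SP nn N k₀ = b ∧ JJ k₀ nn N ((v : ℕ) % SP nn N k₀) = j).card
      ≤ N * nn (j + 1) := by
  have h1 : ((Finset.univ : Finset (Fin L)).filter fun v : Fin L =>
        (v : ℕ) / SP nn N k₀ = b ∧ JJ k₀ nn N ((v : ℕ) % SP nn N k₀) = j).card
      ≤ (Finset.Ico (SP nn N j) (SP nn N (j+1))).card := by
    apply Finset.card_le_card_of_injOn (fun v : Fin L => (v : ℕ) % SP nn N k₀)
    · intro v hv
      rw [Finset.mem_coe, Finset.mem_filter] at hv
      rw [Finset.mem_coe, Finset.mem_Ico]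
      have hmod : (v : ℕ) % SP nn N k₀ < SP nn N k₀ := Nat.mod_lt _ hB
      constructor
      · have h2 := SP_JJ_le k₀ nn N ((v : ℕ) % SP nn N k₀)
        rw [hv.2.2] at h2
        exact h2
      · have h2 := lt_SP_JJ hk₀ nn N ((v : ℕ) % SP nn N k₀) hmod
        rw [hv.2.2] at h2
        exact h2
    · intro v hv w hw hvw
      simp only [Finset.coe_filter, Set.mem_setOf_eq, Finset.mem_univ, true_and] at hv hw
      simp only at hvw
      apply Fin.val_injective
      have hv' := Nat.div_add_mod (v : ℕ) (SP nn N k₀)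
      have hw' := Nat.div_add_mod (w : ℕ) (SP nn N k₀)
      rw [hv.1, hvw] at hv'
      rw [hw.1] at hw'
      omega
  rwa [Nat.card_Ico, SP_succ, Nat.add_sub_cancel_left] at h1

lemma count_c (k₀ : ℕ) (hk₀ : 0 < k₀) (nn : ℕ → ℕ) (N M L : ℕ)
    (hL : L ≤ M * SP nn N k₀) (hB : 0 < SP nn N k₀) (j : ℕ) :
    ((Finset.univ : Finset (Fin L)).filter fun v : Fin L =>
        JJ k₀ nn N ((v : ℕ) % SP nn N k₀) = j).card ≤ M * (N * nn (j + 1)) := by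
  have h1 : ((Finset.univ : Finset (Fin L)).filter fun v : Fin L =>
        JJ k₀ nn N ((v : ℕ) % SP nn N k₀) = j).card
      ≤ ((Finset.range M) ×ˢ (Finset.Ico (SP nn N j) (SP nn N (j+1)))).card := by
    apply Finset.card_le_card_of_injOn
      (fun v : Fin L => ((v : ℕ) / SP nn N k₀, (v : ℕ) % SP nn N k₀))
    · intro v hv
      rw [Finset.mem_coe, Finset.mem_filter] at hv
      rw [Finset.mem_coe, Finset.mem_product, Finset.mem_range, Finset.mem_Ico]
      have hmod : (v : ℕ) % SP nn N k₀ < SP nn N k₀ := Nat.mod_lt _ hB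
      have hvL : (v : ℕ) < L := v.isLt
      refine ⟨Nat.div_lt_of_lt_mul (by rw [Nat.mul_comm] at hL; omega), ?_, ?_⟩
      · have h2 := SP_JJ_le k₀ nn N ((v : ℕ) % SP nn N k₀); rw [hv.2] at h2; exact h2
      · have h2 := lt_SP_JJ hk₀ nn N ((v : ℕ) % SP nn N k₀) hmod; rw [hv.2] at h2; exact h2
    · intro v _ w _ hvw
      simp only [Prod.mk.injEq] at hvw
      apply Fin.val_injective
      have hv' := Nat.div_add_mod (v : ℕ) (SP nn N k₀)
      have hw' := Nat.div_add_mod (w : ℕ) (SP nn N k₀)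
      rw [hvw.1, hvw.2] at hv'
      omega
  rw [Finset.card_product, Nat.card_Ico, Finset.card_range, SP_succ,
    Nat.add_sub_cancel_left] at h1
  exact h1

/-- at most one matched index -/
lemma sum_matched_le {L : ℕ} (g : Fin L → ℕ) (hg : Function.Injective g) (a : ℕ)
    (F : Fin L → ℝ) (c : ℝ) (hc : 0 ≤ c) (hF : ∀ v, a = g v → F v ≤ c) :
    ∑ v : Fin L, (if a = g v then F v else 0) ≤ c := by
  by_cases h : ∃ v, g v = a
  · obtain ⟨v₀, hv₀⟩ := h
    have hle : ∀ v : Fin L, (if a = g v then F v else 0) ≤ (if v = v₀ then c else 0) := by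
      intro v
      by_cases hv : a = g v
      · have hvv : v = v₀ := hg (by rw [hv₀, ← hv])
        subst hvv
        rw [if_pos hv, if_pos rfl]
        exact hF v hv
      · rw [if_neg hv]
        by_cases h2 : v = v₀ <;> simp [h2, hc]
    calc ∑ v : Fin L, (if a = g v then F v else 0)
        ≤ ∑ v : Fin L, (if v = v₀ then c else 0) := Finset.sum_le_sum fun v _ => hle v
      _ = c := by rw [Finset.sum_ite_eq' Finset.univ v₀ fun _ => c, if_pos (Finset.mem_univ _)]
  · push_neg at h
    have hz : ∀ v : Fin L, (if a = g v then F v else 0) = 0 := fun v =>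
      if_neg (fun hv => h v hv.symm)
    rw [Finset.sum_congr rfl fun v _ => hz v]
    simpa using hc

/-- the block+group code function and its monotonicity -/
def codeF (k₀ : ℕ) (nn : ℕ → ℕ) (N i : ℕ) : ℕ :=
  (i / SP nn N k₀) * k₀ + JJ k₀ nn N (i % SP nn N k₀)

lemma codeF_mono {k₀ : ℕ} (hk₀ : 0 < k₀) (nn : ℕ → ℕ) (N : ℕ)
    (hB : 0 < SP nn N k₀) {i i' : ℕ} (h : i ≤ i') :
    codeF k₀ nn N i ≤ codeF k₀ nn N i' := by
  rcases Nat.lt_or_ge (i / SP nn N k₀) (i' / SP nn N k₀) with hd | hd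
  · have h1 : JJ k₀ nn N (i % SP nn N k₀) < k₀ := JJ_lt hk₀ nn N _ (Nat.mod_lt _ hB)
    have h4 : (i / SP nn N k₀ + 1) * k₀ ≤ (i' / SP nn N k₀) * k₀ :=
      Nat.mul_le_mul_right _ (by omega)
    have h5 : (i / SP nn N k₀ + 1) * k₀ = (i / SP nn N k₀) * k₀ + k₀ := by ring
    unfold codeF
    omega
  · have hdd : i / SP nn N k₀ = i' / SP nn N k₀ := le_antisymm (Nat.div_le_div_right h) hd
    have hv' := Nat.div_add_mod i (SP nn N k₀)
    have hw' := Nat.div_add_mod i' (SP nn N k₀)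
    rw [hdd] at hv'
    have hmm : i % SP nn N k₀ ≤ i' % SP nn N k₀ := by omega
    have hJ : JJ k₀ nn N (i % SP nn N k₀) ≤ JJ k₀ nn N (i' % SP nn N k₀) := by
      apply Finset.card_le_card
      intro j hj
      rw [Finset.mem_filter] at hj ⊢
      exact ⟨hj.1, le_trans hj.2 hmm⟩
    unfold codeF
    rw [hdd]
    omega

lemma codeF_lt {k₀ : ℕ} (hk₀ : 0 < k₀) (nn : ℕ → ℕ) (N M i : ℕ)
    (hi : i < M * SP nn N k₀) : codeF k₀ nn N i < M * k₀ := by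
  have hB : 0 < SP nn N k₀ := by
    rcases Nat.eq_zero_or_pos (SP nn N k₀) with h0 | h0
    · rw [h0] at hi; omega
    · exact h0
  have h1 : JJ k₀ nn N (i % SP nn N k₀) < k₀ := JJ_lt hk₀ nn N _ (Nat.mod_lt _ hB)
  have h2 : i / SP nn N k₀ < M := Nat.div_lt_of_lt_mul (by rw [Nat.mul_comm] at hi; omega)
  have h4 : (i / SP nn N k₀ + 1) * k₀ ≤ M * k₀ := Nat.mul_le_mul_right _ (by omega)
  have h5 : (i / SP nn N k₀ + 1) * k₀ = (i / SP nn N k₀) * k₀ + k₀ := by ring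
  unfold codeF
  omega

lemma codeF_colour {k₀ : ℕ} (hk₀ : 0 < k₀) (nn : ℕ → ℕ) (N : ℕ)
    (hB : 0 < SP nn N k₀) (i : ℕ) :
    JJ k₀ nn N (i % SP nn N k₀) = codeF k₀ nn N i % k₀ := by
  have h1 : JJ k₀ nn N (i % SP nn N k₀) < k₀ := JJ_lt hk₀ nn N _ (Nat.mod_lt _ hB)
  unfold codeF
  rw [Nat.add_comm, Nat.add_mul_mod_self_right, Nat.mod_eq_of_lt h1]

/-! ### generic fibering lemma for the diagonal -/

lemma diag_core {L₁ L₂ : ℕ} (P : Finset (Fin L₁ × Fin L₂)) (f : Fin L₁ × Fin L₂ → ℝ)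
    (bf : Fin L₂ → ℕ) (gf : Fin L₁ → ℕ) (M₂ G : ℕ)
    (hbM : ∀ v, bf v < M₂) (hgG : ∀ u, gf u < G)
    (hmono : ∀ p ∈ P, ∀ p' ∈ P, (p.2 : ℕ) < (p'.2 : ℕ) → bf p.2 ≤ bf p'.2 ∧ gf p.1 ≤ gf p'.1)
    (hinj : ∀ p ∈ P, ∀ p' ∈ P, p.2 = p'.2 → p = p')
    (C : ℝ) (hC : 0 ≤ C)
    (hfiber : ∀ p₀ ∈ P, ∀ S : Finset (Fin L₁ × Fin L₂), S ⊆ P →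
      (∀ p ∈ S, bf p.2 = bf p₀.2 ∧ gf p.1 = gf p₀.1) → ∑ p ∈ S, f p ≤ C) :
    ∑ p ∈ P, f p ≤ (M₂ + G) * C := by
  have hmaps : ∀ p ∈ P, bf p.2 + gf p.1 ∈ Finset.range (M₂ + G) := fun p _ =>
    Finset.mem_range.2 (by have := hbM p.2; have := hgG p.1; omega)
  rw [← Finset.sum_fiberwise_of_maps_to hmaps f]
  have hbound : ∀ y ∈ Finset.range (M₂ + G),
      ∑ p ∈ P.filter (fun p => bf p.2 + gf p.1 = y), f p ≤ C := by
    intro y _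
    rcases Finset.eq_empty_or_nonempty (P.filter (fun p => bf p.2 + gf p.1 = y)) with he | hne
    · rw [he, Finset.sum_empty]; exact hC
    · obtain ⟨p₀, hp₀⟩ := hne
      have hp₀P : p₀ ∈ P := Finset.mem_of_mem_filter _ hp₀
      have hp₀y : bf p₀.2 + gf p₀.1 = y := (Finset.mem_filter.1 hp₀).2
      have hcond : ∀ p ∈ P.filter (fun p => bf p.2 + gf p.1 = y),
          bf p.2 = bf p₀.2 ∧ gf p.1 = gf p₀.1 := by
        intro p hp
        have hpP := (Finset.mem_filter.1 hp).1
        have hpy := (Finset.mem_filter.1 hp).2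
        rcases Nat.lt_trichotomy ((p.2 : ℕ)) ((p₀.2 : ℕ)) with hlt | heq | hgt
        · have h2 := hmono p hpP p₀ hp₀P hlt
          omega
        · have h2 : p.2 = p₀.2 := Fin.val_injective heq
          have h3 := hinj p hpP p₀ hp₀P h2
          rw [h3]
          exact ⟨rfl, rfl⟩
        · have h2 := hmono p₀ hp₀P p hpP hgt
          omega
      exact hfiber p₀ hp₀P _ (Finset.filter_subset _ _) hcond
  calc ∑ y ∈ Finset.range (M₂ + G), ∑ p ∈ P.filter (fun p => bf p.2 + gf p.1 = y), f p
      ≤ ∑ _y ∈ Finset.range (M₂ + G), C := Finset.sum_le_sum hbound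
    _ = (M₂ + G) * C := by
        rw [Finset.sum_const, Finset.card_range, nsmul_eq_mul]
        push_cast
        ring

lemma double_sum_filter {α β : Type*} [Fintype α] [Fintype β]
    (c : α → β → Prop) [∀ a b, Decidable (c a b)] (f : α → β → ℝ) :
    (∑ u : α, ∑ v : β, if c u v then f u v else 0)
      = ∑ p ∈ Finset.univ.filter (fun p : α × β => c p.1 p.2), f p.1 p.2 := by
  rw [Finset.sum_filter, ← Finset.univ_product_univ, Finset.sum_product]

/-- variant of `sum_matched_le` with the equation flipped -/
lemma sum_matched_le' {L : ℕ} (g : Fin L → ℕ) (hg : Function.Injective g) (a : ℕ)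
    (F : Fin L → ℝ) (c : ℝ) (hc : 0 ≤ c) (hF : ∀ v, g v = a → F v ≤ c) :
    ∑ v : Fin L, (if g v = a then F v else 0) ≤ c := by
  have h : ∀ v : Fin L, (if g v = a then F v else 0) = (if a = g v then F v else 0) := by
    intro v
    by_cases hv : g v = a
    · rw [if_pos hv, if_pos hv.symm]
    · rw [if_neg hv, if_neg (fun hh => hv hh.symm)]
  rw [Finset.sum_congr rfl fun v _ => h v]
  exact sum_matched_le g hg a F c hc (fun v hv => hF v hv.symm)

/-- zpow cancellation helper -/
lemma pow_cancel (c : ℕ) (α : ℝ) : (2 : ℝ) ^ c * α * (2 : ℝ) ^ (-(c : ℤ)) = α := by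
  rw [← zpow_natCast (2 : ℝ) c, mul_comm ((2:ℝ) ^ (c:ℤ)) α, mul_assoc,
    ← zpow_add₀ (two_ne_zero)]
  · simp

/-- the sum of all coefficients of one resolution is at most 1 -/
lemma sum_alpha (k₀ : ℕ) (hk₀ : 0 < k₀) (nn : ℕ → ℕ)
    (hpos : ∀ j, 1 ≤ j → j ≤ k₀ → 0 < nn j) (N M L : ℕ)
    (hL : L ≤ M * SP nn N k₀) (hB : 0 < SP nn N k₀) (hM : 0 < M) (hN : 0 < N) :
    ∑ u : Fin L, (1 : ℝ) /
        (((M * N : ℕ) : ℝ) * (nn (JJ k₀ nn N ((u : ℕ) % SP nn N k₀) + 1) : ℝ) * (k₀ : ℝ))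
      ≤ 1 := by
  have hmaps : ∀ u : Fin L, u ∈ Finset.univ →
      JJ k₀ nn N ((u : ℕ) % SP nn N k₀) ∈ Finset.range k₀ := fun u _ =>
    Finset.mem_range.2 (JJ_lt hk₀ nn N _ (Nat.mod_lt _ hB))
  rw [← Finset.sum_fiberwise_of_maps_to hmaps]
  have hbound : ∀ j ∈ Finset.range k₀,
      (∑ u ∈ Finset.univ.filter
          (fun u : Fin L => JJ k₀ nn N ((u : ℕ) % SP nn N k₀) = j),
        (1 : ℝ) / (((M * N : ℕ) : ℝ) * (nn (JJ k₀ nn N ((u : ℕ) % SP nn N k₀) + 1) : ℝ) * (k₀ : ℝ)))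
      ≤ 1 / k₀ := by
    intro j hj
    rw [Finset.mem_range] at hj
    have hnn : 0 < nn (j + 1) := hpos (j + 1) (by omega) (by omega)
    have hconst : ∀ u ∈ Finset.univ.filter
        (fun u : Fin L => JJ k₀ nn N ((u : ℕ) % SP nn N k₀) = j),
        (1 : ℝ) / (((M * N : ℕ) : ℝ) * (nn (JJ k₀ nn N ((u : ℕ) % SP nn N k₀) + 1) : ℝ) * (k₀ : ℝ))
          = (1 : ℝ) / (((M * N : ℕ) : ℝ) * (nn (j + 1) : ℝ) * (k₀ : ℝ)) := by
      intro u hu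
      rw [(Finset.mem_filter.1 hu).2]
    rw [Finset.sum_congr rfl hconst, Finset.sum_const, nsmul_eq_mul]
    have hcard := count_c k₀ hk₀ nn N M L hL hB j
    calc ((Finset.univ.filter
            (fun u : Fin L => JJ k₀ nn N ((u : ℕ) % SP nn N k₀) = j)).card : ℝ)
            * (1 / (((M * N : ℕ) : ℝ) * (nn (j + 1) : ℝ) * (k₀ : ℝ)))
        ≤ ((M * (N * nn (j + 1)) : ℕ) : ℝ)
            * (1 / (((M * N : ℕ) : ℝ) * (nn (j + 1) : ℝ) * (k₀ : ℝ))) := by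
          apply mul_le_mul_of_nonneg_right
          · exact_mod_cast hcard
          · positivity
      _ = 1 / k₀ := by
          rw [mul_one_div, div_eq_div_iff (by positivity) (Nat.cast_ne_zero.mpr (by omega) : (k₀:ℝ) ≠ 0)]
          push_cast
          ring
  calc ∑ j ∈ Finset.range k₀, _ ≤ ∑ _j ∈ Finset.range k₀, (1:ℝ)/k₀ := Finset.sum_le_sum hbound
    _ = 1 := by
      rw [Finset.sum_const, Finset.card_range, nsmul_eq_mul]
      field_simp

/-! ### diagSum and helpers -/

lemma two_mul_le_two_pow {a : ℕ} (h : 2 ≤ a) : 2 * a ≤ 2 ^ a := by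
  induction a with
  | zero => omega
  | succ b ih =>
    rcases Nat.lt_or_ge b 2 with hb | hb
    · interval_cases b <;> norm_num
    · have h2 := ih hb
      rw [pow_succ]
      omega

lemma SP_pos {k₀ : ℕ} (hk₀ : 0 < k₀) (nn : ℕ → ℕ) (N : ℕ) (hN : 0 < N)
    (hnn1 : 0 < nn 1) : 0 < SP nn N k₀ := by
  have h0 : 0 ∈ Finset.range k₀ := Finset.mem_range.2 hk₀
  have h1 := Finset.single_le_sum (f := fun i => N * nn (i + 1))
    (fun i _ => Nat.zero_le _) h0
  have hpos : 0 < N * nn 1 := Nat.mul_pos hN hnn1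
  unfold SP
  exact Nat.lt_of_lt_of_le hpos (by simpa using h1)

lemma RadM_get (k₀ : ℕ) (nn : ℕ → ℕ) (N M : ℕ)
    (u : Fin (repRes M (RadBase k₀ nn N)).length) :
    (repRes M (RadBase k₀ nn N)).get u
      = ((JJ k₀ nn N ((u : ℕ) % SP nn N k₀) + 1) * k₀,
          1 / (((M * N : ℕ) : ℝ)
            * (nn (JJ k₀ nn N ((u : ℕ) % SP nn N k₀) + 1) : ℝ) * (k₀ : ℝ))) := by
  rw [List.get_eq_getElem]
  exact RadM_getElem k₀ nn N M (u : ℕ) u.isLt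

def diagSum (r s : Res) (l : Fin r.length → ℕ) (m : Fin s.length → ℕ) : ℝ :=
  ∑ u : Fin r.length, ∑ v : Fin s.length,
    if l u = m v ∧ (r.get u).1 = (s.get v).1 then
      (2 : ℝ) ^ ((r.get u).1) * (r.get u).2 * (2 : ℝ) ^ (-((s.get v).1 : ℤ))
    else 0

lemma ite_split (A : Prop) [Decidable A] (a b : ℕ) (x : ℝ) :
    (if A then x else 0)
      = (if A ∧ a = b then x else 0)
        + ((if A ∧ a < b then x else 0) + (if A ∧ b < a then x else 0)) := by
  by_cases hA : A
  · rcases lt_trichotomy a b with h | h | h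
    · rw [if_pos hA, if_neg (fun hh : A ∧ a = b => absurd hh.2 (by omega)),
        if_pos ⟨hA, h⟩, if_neg (fun hh : A ∧ b < a => absurd hh.2 (by omega))]
      ring
    · rw [if_pos hA, if_pos ⟨hA, h⟩, if_neg (fun hh : A ∧ a < b => absurd hh.2 (by omega)),
        if_neg (fun hh : A ∧ b < a => absurd hh.2 (by omega))]
      ring
    · rw [if_pos hA, if_neg (fun hh : A ∧ a = b => absurd hh.2 (by omega)),
        if_neg (fun hh : A ∧ a < b => absurd hh.2 (by omega)), if_pos ⟨hA, h⟩]
      ring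
  · rw [if_neg hA, if_neg (fun hh : A ∧ a = b => hA hh.1),
      if_neg (fun hh : A ∧ a < b => hA hh.1), if_neg (fun hh : A ∧ b < a => hA hh.1)]
    ring

lemma ite_and_eq (A B : Prop) [Decidable A] [Decidable B] (x : ℝ) :
    (if A ∧ B then x else 0) = (if A then (if B then x else 0) else 0) := by
  by_cases hA : A <;> by_cases hB : B <;> simp [hA, hB]

lemma X_eq (a b : ℕ) (α : ℝ) :
    (2 : ℝ) ^ a * α * (2 : ℝ) ^ (-(b : ℤ)) = (2 : ℝ) ^ ((a : ℤ) - (b : ℤ)) * α := by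
  rw [← zpow_natCast (2 : ℝ) a, mul_comm ((2:ℝ) ^ (a:ℤ)) α, mul_assoc,
    ← zpow_add₀ (two_ne_zero (α := ℝ))]
  rw [mul_comm, sub_eq_add_neg]

lemma X_le (k₀ a b : ℕ) (α : ℝ) (hα : 0 ≤ α) (h : a + k₀ ≤ b) :
    (2 : ℝ) ^ a * α * (2 : ℝ) ^ (-(b : ℤ)) ≤ (2 : ℝ) ^ (-(k₀ : ℤ)) * α := by
  rw [X_eq]
  apply mul_le_mul_of_nonneg_right _ hα
  apply zpow_le_zpow_right₀ one_le_two
  omega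

lemma two_zpow_le_inv_two_mul {k₀ : ℕ} (hk₀ : 2 ≤ k₀) :
    (2 : ℝ) ^ (-(k₀ : ℤ)) ≤ 1 / (2 * (k₀ : ℝ)) := by
  rw [zpow_neg, zpow_natCast, inv_eq_one_div]
  apply one_div_le_one_div_of_le (by positivity)
  have h := two_mul_le_two_pow hk₀
  calc (2 : ℝ) * (k₀ : ℝ) = ((2 * k₀ : ℕ) : ℝ) := by push_cast; ring
    _ ≤ ((2 ^ k₀ : ℕ) : ℝ) := by exact_mod_cast h
    _ = (2 : ℝ) ^ k₀ := by push_cast; ring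

/-- commuting the diagonal sum -/
lemma diagSum_comm (k₀ : ℕ) (hk₀ : 0 < k₀) (nn : ℕ → ℕ)
    (M₁ N₁ M₂ N₂ : ℕ) (hT : M₁ * N₁ = M₂ * N₂)
    (l : Fin (repRes M₁ (RadBase k₀ nn N₁)).length → ℕ)
    (m : Fin (repRes M₂ (RadBase k₀ nn N₂)).length → ℕ) :
    diagSum (repRes M₁ (RadBase k₀ nn N₁)) (repRes M₂ (RadBase k₀ nn N₂)) l m
      = diagSum (repRes M₂ (RadBase k₀ nn N₂)) (repRes M₁ (RadBase k₀ nn N₁)) m l := by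
  unfold diagSum
  rw [Finset.sum_comm]
  apply Finset.sum_congr rfl
  intro v _
  apply Finset.sum_congr rfl
  intro u _
  simp only [RadM_get k₀ nn N₁ M₁, RadM_get k₀ nn N₂ M₂]
  by_cases h : l u = m v ∧ (JJ k₀ nn N₁ ((u : ℕ) % SP nn N₁ k₀) + 1) * k₀
      = (JJ k₀ nn N₂ ((v : ℕ) % SP nn N₂ k₀) + 1) * k₀
  · obtain ⟨h1, h2⟩ := h
    rw [if_pos ⟨h1, h2⟩, if_pos ⟨h1.symm, h2.symm⟩]
    have hj : JJ k₀ nn N₁ ((u : ℕ) % SP nn N₁ k₀) + 1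
        = JJ k₀ nn N₂ ((v : ℕ) % SP nn N₂ k₀) + 1 :=
      Nat.eq_of_mul_eq_mul_right hk₀ h2
    rw [hj, hT]
  · rw [if_neg h, if_neg (fun hh => h ⟨hh.1.symm, hh.2.symm⟩)]

/-! ### the diagonal bound -/

lemma diagSum_le (k₀ : ℕ) (hk₀ : 0 < k₀) (nn : ℕ → ℕ)
    (hpos : ∀ j, 1 ≤ j → j ≤ k₀ → 0 < nn j)
    (M₁ N₁ M₂ N₂ : ℕ) (hM₁ : 0 < M₁) (hN₁ : 0 < N₁) (hM₂ : 0 < M₂) (hN₂ : 0 < N₂)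
    (hT : M₁ * N₁ = M₂ * N₂)
    (l : Fin (repRes M₁ (RadBase k₀ nn N₁)).length → ℕ)
    (m : Fin (repRes M₂ (RadBase k₀ nn N₂)).length → ℕ)
    (hl : StrictMono l) (hm : StrictMono m) :
    diagSum (repRes M₁ (RadBase k₀ nn N₁)) (repRes M₂ (RadBase k₀ nn N₂)) l m
      ≤ ((M₂ : ℝ) + ((M₁ * k₀ : ℕ) : ℝ)) * ((N₂ : ℝ) / (((M₂ * N₂ : ℕ) : ℝ) * (k₀ : ℝ))) := by
  have hnn1 : 0 < nn 1 := hpos 1 le_rfl hk₀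
  have hB₁ : 0 < SP nn N₁ k₀ := SP_pos hk₀ nn N₁ hN₁ hnn1
  have hB₂ : 0 < SP nn N₂ k₀ := SP_pos hk₀ nn N₂ hN₂ hnn1
  have hL₁ : (repRes M₁ (RadBase k₀ nn N₁)).length = M₁ * SP nn N₁ k₀ := RadM_length _ _ _ _
  have hL₂ : (repRes M₂ (RadBase k₀ nn N₂)).length = M₂ * SP nn N₂ k₀ := RadM_length _ _ _ _
  unfold diagSum
  simp only [RadM_get k₀ nn N₁ M₁, RadM_get k₀ nn N₂ M₂]
  rw [double_sum_filter
    (fun u v => l u = m v ∧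
      (JJ k₀ nn N₁ ((u : ℕ) % SP nn N₁ k₀) + 1) * k₀
        = (JJ k₀ nn N₂ ((v : ℕ) % SP nn N₂ k₀) + 1) * k₀)
    (fun u v =>
      (2 : ℝ) ^ ((JJ k₀ nn N₁ ((u : ℕ) % SP nn N₁ k₀) + 1) * k₀)
        * (1 / (((M₁ * N₁ : ℕ) : ℝ)
            * (nn (JJ k₀ nn N₁ ((u : ℕ) % SP nn N₁ k₀) + 1) : ℝ) * (k₀ : ℝ)))
        * (2 : ℝ) ^ (-(((JJ k₀ nn N₂ ((v : ℕ) % SP nn N₂ k₀) + 1) * k₀ : ℕ) : ℤ)))]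
  apply diag_core _ _
    (fun v => (v : ℕ) / SP nn N₂ k₀)
    (fun u => codeF k₀ nn N₁ (u : ℕ))
    M₂ (M₁ * k₀)
    (fun v => by
      have hv : (v : ℕ) < M₂ * SP nn N₂ k₀ := lt_of_lt_of_eq v.isLt hL₂
      show (v : ℕ) / SP nn N₂ k₀ < M₂
      exact Nat.div_lt_of_lt_mul (by rw [Nat.mul_comm]; exact hv))
    (fun u => by
      have hu : (u : ℕ) < M₁ * SP nn N₁ k₀ := lt_of_lt_of_eq u.isLt hL₁
      show codeF k₀ nn N₁ (u : ℕ) < M₁ * k₀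
      exact codeF_lt hk₀ nn N₁ M₁ _ hu)
    ?hmono ?hinj _ ?hC ?hfiber
  case hmono =>
    intro p hp p' hp' hv
    have hpc := (Finset.mem_filter.1 hp).2
    have hpc' := (Finset.mem_filter.1 hp').2
    have hmv : m p.2 < m p'.2 := hm (Fin.lt_def.mpr hv)
    have hlu : l p.1 < l p'.1 := by rw [hpc.1, hpc'.1]; exact hmv
    have hu : (p.1 : ℕ) < (p'.1 : ℕ) := Fin.lt_def.mp (hl.lt_iff_lt.mp hlu)
    exact ⟨Nat.div_le_div_right (Nat.le_of_lt hv),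
      codeF_mono hk₀ nn N₁ hB₁ (Nat.le_of_lt hu)⟩
  case hinj =>
    intro p hp p' hp' h2
    have hpc := (Finset.mem_filter.1 hp).2
    have hpc' := (Finset.mem_filter.1 hp').2
    have h1 : l p.1 = l p'.1 := by rw [hpc.1, hpc'.1, h2]
    exact Prod.ext (hl.injective h1) h2
  case hC => positivity
  case hfiber =>
    intro p₀ hp₀ S hSP hSprop
    have hc₀ := (Finset.mem_filter.1 hp₀).2
    set j := JJ k₀ nn N₂ ((p₀.2 : ℕ) % SP nn N₂ k₀) with hjdef
    have hjlt : j < k₀ := JJ_lt hk₀ nn N₂ _ (Nat.mod_lt _ hB₂)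
    have hnnj : 0 < nn (j + 1) := hpos (j + 1) (by omega) (by omega)
    have hkey : ∀ p ∈ S, JJ k₀ nn N₂ ((p.2 : ℕ) % SP nn N₂ k₀) = j
        ∧ JJ k₀ nn N₁ ((p.1 : ℕ) % SP nn N₁ k₀) = j
        ∧ (p.2 : ℕ) / SP nn N₂ k₀ = (p₀.2 : ℕ) / SP nn N₂ k₀ := by
      intro p hp
      have h2 := (Finset.mem_filter.1 (hSP hp)).2
      have h3 := hSprop p hp
      have hcol : JJ k₀ nn N₁ ((p.1 : ℕ) % SP nn N₁ k₀)
          = JJ k₀ nn N₂ ((p.2 : ℕ) % SP nn N₂ k₀) := by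
        have := Nat.eq_of_mul_eq_mul_right hk₀ h2.2
        omega
      have hcol₀ : JJ k₀ nn N₁ ((p₀.1 : ℕ) % SP nn N₁ k₀)
          = JJ k₀ nn N₂ ((p₀.2 : ℕ) % SP nn N₂ k₀) := by
        have := Nat.eq_of_mul_eq_mul_right hk₀ hc₀.2
        omega
      have h32 : codeF k₀ nn N₁ ((p.1 : ℕ)) = codeF k₀ nn N₁ ((p₀.1 : ℕ)) := h3.2
      have h31 : (p.2 : ℕ) / SP nn N₂ k₀ = (p₀.2 : ℕ) / SP nn N₂ k₀ := h3.1
      have hgf : JJ k₀ nn N₁ ((p.1 : ℕ) % SP nn N₁ k₀)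
          = JJ k₀ nn N₁ ((p₀.1 : ℕ) % SP nn N₁ k₀) := by
        rw [codeF_colour hk₀ nn N₁ hB₁ (p.1 : ℕ), codeF_colour hk₀ nn N₁ hB₁ (p₀.1 : ℕ),
          h32]
      exact ⟨by omega, by omega, h31⟩
    have hterm : ∀ p ∈ S,
        (2 : ℝ) ^ ((JJ k₀ nn N₁ ((p.1 : ℕ) % SP nn N₁ k₀) + 1) * k₀)
            * (1 / (((M₁ * N₁ : ℕ) : ℝ)
              * (nn (JJ k₀ nn N₁ ((p.1 : ℕ) % SP nn N₁ k₀) + 1) : ℝ) * (k₀ : ℝ)))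
            * (2 : ℝ) ^ (-(((JJ k₀ nn N₂ ((p.2 : ℕ) % SP nn N₂ k₀) + 1) * k₀ : ℕ) : ℤ))
          = 1 / (((M₁ * N₁ : ℕ) : ℝ) * (nn (j + 1) : ℝ) * (k₀ : ℝ)) := by
      intro p hp
      obtain ⟨ha, hb, _⟩ := hkey p hp
      rw [ha, hb]
      exact pow_cancel _ _
    have hcard : S.card ≤ N₂ * nn (j + 1) := by
      apply le_trans
        (Finset.card_le_card_of_injOn (fun p => p.2)
          (fun p hp => by
            rw [Finset.mem_coe, Finset.mem_filter]
            exact ⟨Finset.mem_univ _, (hkey p hp).2.2, (hkey p hp).1⟩)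
          (fun p hp p' hp' h2 => by
            simp only [Finset.mem_coe] at hp hp'
            have h2' : p.2 = p'.2 := h2
            have hpc := (Finset.mem_filter.1 (hSP hp)).2
            have hpc' := (Finset.mem_filter.1 (hSP hp')).2
            have h1 : l p.1 = l p'.1 := by rw [hpc.1, hpc'.1, h2']
            exact Prod.ext (hl.injective h1) h2'))
        (count_bc k₀ hk₀ nn N₂ (repRes M₂ (RadBase k₀ nn N₂)).length hB₂
          ((p₀.2 : ℕ) / SP nn N₂ k₀) j)
    rw [Finset.sum_congr rfl hterm, Finset.sum_const, nsmul_eq_mul]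
    have hd1 : (0 : ℝ) < ((M₂ * N₂ : ℕ) : ℝ) * (nn (j + 1) : ℝ) * (k₀ : ℝ) := by
      have h5 : 0 < (M₂ * N₂) * nn (j + 1) * k₀ :=
        Nat.mul_pos (Nat.mul_pos (Nat.mul_pos hM₂ hN₂) hnnj) hk₀
      exact_mod_cast h5
    have hd2 : (0 : ℝ) < ((M₂ * N₂ : ℕ) : ℝ) * (k₀ : ℝ) := by
      have h5 : 0 < (M₂ * N₂) * k₀ := Nat.mul_pos (Nat.mul_pos hM₂ hN₂) hk₀
      exact_mod_cast h5
    calc (S.card : ℝ) * (1 / (((M₁ * N₁ : ℕ) : ℝ) * (nn (j + 1) : ℝ) * (k₀ : ℝ)))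
        ≤ ((N₂ * nn (j + 1) : ℕ) : ℝ)
            * (1 / (((M₁ * N₁ : ℕ) : ℝ) * (nn (j + 1) : ℝ) * (k₀ : ℝ))) := by
          apply mul_le_mul_of_nonneg_right (by exact_mod_cast hcard) (by positivity)
      _ = (N₂ : ℝ) / (((M₂ * N₂ : ℕ) : ℝ) * (k₀ : ℝ)) := by
          rw [hT, mul_one_div, div_eq_div_iff (ne_of_gt hd1) (ne_of_gt hd2)]
          push_cast
          ring

/-! ### off-diagonal machinery -/

lemma pow_comb (a b : ℕ) : (2:ℝ) ^ a * (2:ℝ) ^ (-(b : ℤ)) = (2:ℝ) ^ ((a : ℤ) - (b : ℤ)) := by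
  rw [← zpow_natCast (2:ℝ) a, ← zpow_add₀ (two_ne_zero (α := ℝ)), sub_eq_add_neg]

def gb (k₀ : ℕ) (nn : ℕ → ℕ) (T : ℕ) (j' : ℕ) : ℝ :=
  ∑ j ∈ Finset.Icc (j' + 1) k₀,
    (2:ℝ) ^ (j * k₀) * (1 / ((T : ℝ) * (nn j : ℝ) * (k₀ : ℝ))) * (2:ℝ) ^ (-((j' * k₀ : ℕ) : ℤ))

lemma gb_nonneg (k₀ : ℕ) (nn : ℕ → ℕ) (T : ℕ) (j' : ℕ) : 0 ≤ gb k₀ nn T j' :=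
  Finset.sum_nonneg fun j _ => by positivity

lemma gb_total (k k₀ : ℕ) (hk₀ : 2 ≤ k₀) (hsq : k₀ * k₀ ≤ k) (nn : ℕ → ℕ)
    (hpos : ∀ j, 1 ≤ j → j ≤ k₀ → 0 < nn j)
    (hratio : ∑ j ∈ Finset.Icc 1 k₀, ∑ j' ∈ Finset.Icc 1 k₀,
      (if j < j' then (nn j : ℝ) / (nn j' : ℝ) else 0) < (2 : ℝ) ^ (-(k : ℤ)))
    (M₁ N₁ M₂ N₂ : ℕ) (hM₂ : 0 < M₂) (hN₂ : 0 < N₂) (hT : M₁ * N₁ = M₂ * N₂) :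
    ∑ j' ∈ Finset.range k₀, ((M₂ * (N₂ * nn (j' + 1)) : ℕ) : ℝ) * gb k₀ nn (M₁ * N₁) (j' + 1)
      ≤ 1 / (2 * (k₀ : ℝ)) := by
  have hk₀0 : 0 < k₀ := by omega
  have hterm : ∀ j' ∈ Finset.range k₀,
      ((M₂ * (N₂ * nn (j' + 1)) : ℕ) : ℝ) * gb k₀ nn (M₁ * N₁) (j' + 1)
        ≤ ∑ j ∈ Finset.Icc (j' + 1 + 1) k₀,
            (2:ℝ) ^ (((k₀ * k₀ : ℕ) : ℤ) - (k₀ : ℤ)) * (1 / (k₀ : ℝ))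
              * ((nn (j' + 1) : ℝ) / (nn j : ℝ)) := by
    intro j' hj'
    rw [Finset.mem_range] at hj'
    unfold gb
    rw [Finset.mul_sum]
    apply Finset.sum_le_sum
    intro j hj
    rw [Finset.mem_Icc] at hj
    have hnnj : 0 < nn j := hpos j (by omega) hj.2
    have hnnj' : 0 < nn (j' + 1) := hpos (j' + 1) (by omega) (by omega)
    have hnnjr : (nn j : ℝ) ≠ 0 := Nat.cast_ne_zero.mpr (by omega)
    have hkr : (k₀ : ℝ) ≠ 0 := Nat.cast_ne_zero.mpr (by omega)
    have hMNr : ((M₂ * N₂ : ℕ) : ℝ) ≠ 0 :=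
      Nat.cast_ne_zero.mpr (by have := Nat.mul_pos hM₂ hN₂; omega)
    have heq : ((M₂ * (N₂ * nn (j' + 1)) : ℕ) : ℝ)
          * ((2:ℝ) ^ (j * k₀)
              * (1 / (((M₁ * N₁ : ℕ) : ℝ) * (nn j : ℝ) * (k₀ : ℝ)))
              * (2:ℝ) ^ (-(((j' + 1) * k₀ : ℕ) : ℤ)))
        = (2:ℝ) ^ (((j * k₀ : ℕ) : ℤ) - (((j' + 1) * k₀ : ℕ) : ℤ)) * (1 / (k₀ : ℝ))
            * ((nn (j' + 1) : ℝ) / (nn j : ℝ)) := by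
      rw [hT]
      rw [mul_comm ((2:ℝ) ^ (j * k₀)) (1 / (((M₂ * N₂ : ℕ) : ℝ) * (nn j : ℝ) * (k₀ : ℝ))),
        mul_assoc, pow_comb]
      push_cast
      field_simp
    rw [heq]
    apply mul_le_mul_of_nonneg_right _ (by positivity)
    apply mul_le_mul_of_nonneg_right _ (by positivity)
    apply zpow_le_zpow_right₀ one_le_two
    have h9 : j * k₀ ≤ k₀ * k₀ := Nat.mul_le_mul_right _ hj.2
    have h10 : k₀ ≤ (j' + 1) * k₀ := Nat.le_mul_of_pos_left _ (by omega)
    omega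
  have hsig : ∑ j' ∈ Finset.range k₀, ∑ j ∈ Finset.Icc (j' + 1 + 1) k₀,
        ((nn (j' + 1) : ℝ) / (nn j : ℝ))
      = ∑ a ∈ Finset.Icc 1 k₀, ∑ b ∈ Finset.Icc 1 k₀,
          (if a < b then (nn a : ℝ) / (nn b : ℝ) else 0) := by
    apply Finset.sum_nbij' (fun j' => j' + 1) (fun a => a - 1)
    · intro a ha
      rw [Finset.mem_range] at ha
      rw [Finset.mem_Icc]
      omega
    · intro a ha
      rw [Finset.mem_Icc] at ha
      rw [Finset.mem_range]
      omega
    · intro a _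
      omega
    · intro a ha
      rw [Finset.mem_Icc] at ha
      omega
    · intro j' hj'
      have hfil : Finset.filter (fun b => j' + 1 < b) (Finset.Icc 1 k₀)
          = Finset.Icc (j' + 1 + 1) k₀ := by
        ext b
        simp only [Finset.mem_filter, Finset.mem_Icc]
        omega
      rw [← hfil, Finset.sum_filter]
  calc ∑ j' ∈ Finset.range k₀, ((M₂ * (N₂ * nn (j' + 1)) : ℕ) : ℝ) * gb k₀ nn (M₁ * N₁) (j' + 1)
      ≤ ∑ j' ∈ Finset.range k₀, ∑ j ∈ Finset.Icc (j' + 1 + 1) k₀,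
          (2:ℝ) ^ (((k₀ * k₀ : ℕ) : ℤ) - (k₀ : ℤ)) * (1 / (k₀ : ℝ))
            * ((nn (j' + 1) : ℝ) / (nn j : ℝ)) := Finset.sum_le_sum hterm
    _ = (2:ℝ) ^ (((k₀ * k₀ : ℕ) : ℤ) - (k₀ : ℤ)) * (1 / (k₀ : ℝ))
          * ∑ j' ∈ Finset.range k₀, ∑ j ∈ Finset.Icc (j' + 1 + 1) k₀,
              ((nn (j' + 1) : ℝ) / (nn j : ℝ)) := by
        simp only [Finset.mul_sum]
    _ = (2:ℝ) ^ (((k₀ * k₀ : ℕ) : ℤ) - (k₀ : ℤ)) * (1 / (k₀ : ℝ))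
          * ∑ a ∈ Finset.Icc 1 k₀, ∑ b ∈ Finset.Icc 1 k₀,
              (if a < b then (nn a : ℝ) / (nn b : ℝ) else 0) := by rw [hsig]
    _ ≤ (2:ℝ) ^ (((k₀ * k₀ : ℕ) : ℤ) - (k₀ : ℤ)) * (1 / (k₀ : ℝ)) * (2 : ℝ) ^ (-(k : ℤ)) :=
        mul_le_mul_of_nonneg_left (le_of_lt hratio) (by positivity)
    _ ≤ 1 / (2 * (k₀ : ℝ)) := by
        have h1 : (2:ℝ) ^ (((k₀ * k₀ : ℕ) : ℤ) - (k₀ : ℤ)) * (2:ℝ) ^ (-(k : ℤ))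
            = (2:ℝ) ^ ((((k₀ * k₀ : ℕ) : ℤ) - (k₀ : ℤ)) + -(k : ℤ)) := by
          rw [← zpow_add₀ (two_ne_zero (α := ℝ))]
        have hsq' : ((k₀ * k₀ : ℕ) : ℤ) ≤ (k : ℤ) := by exact_mod_cast hsq
        have h2 : (2:ℝ) ^ ((((k₀ * k₀ : ℕ) : ℤ) - (k₀ : ℤ)) + -(k : ℤ)) ≤ (2:ℝ) ^ (-1 : ℤ) :=
          zpow_le_zpow_right₀ one_le_two (by omega)
        calc (2:ℝ) ^ (((k₀ * k₀ : ℕ) : ℤ) - (k₀ : ℤ)) * (1 / (k₀ : ℝ)) * (2 : ℝ) ^ (-(k : ℤ))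
            = ((2:ℝ) ^ (((k₀ * k₀ : ℕ) : ℤ) - (k₀ : ℤ)) * (2:ℝ) ^ (-(k : ℤ))) * (1 / (k₀ : ℝ)) := by
              ring
          _ = (2:ℝ) ^ ((((k₀ * k₀ : ℕ) : ℤ) - (k₀ : ℤ)) + -(k : ℤ)) * (1 / (k₀ : ℝ)) := by
              rw [h1]
          _ ≤ (2:ℝ) ^ (-1 : ℤ) * (1 / (k₀ : ℝ)) :=
              mul_le_mul_of_nonneg_right h2 (by positivity)
          _ = 1 / (2 * (k₀ : ℝ)) := by
              rw [zpow_neg_one]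
              ring

/-! ### the master bound -/

lemma pairSum_le (k k₀ : ℕ) (nn : ℕ → ℕ)
    (hk₀ : 2 ≤ k₀) (hsq : k₀ * k₀ ≤ k)
    (hpos : ∀ j, 1 ≤ j → j ≤ k₀ → 0 < nn j)
    (hratio : ∑ j ∈ Finset.Icc 1 k₀, ∑ j' ∈ Finset.Icc 1 k₀,
      (if j < j' then (nn j : ℝ) / (nn j' : ℝ) else 0) < (2 : ℝ) ^ (-(k : ℤ)))
    (M₁ N₁ M₂ N₂ : ℕ) (hM₁ : 0 < M₁) (hN₁ : 0 < N₁) (hM₂ : 0 < M₂) (hN₂ : 0 < N₂)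
    (hT : M₁ * N₁ = M₂ * N₂)
    (l : Fin (repRes M₁ (RadBase k₀ nn N₁)).length → ℕ)
    (m : Fin (repRes M₂ (RadBase k₀ nn N₂)).length → ℕ)
    (hl : StrictMono l) (hm : StrictMono m) :
    pairSum (repRes M₁ (RadBase k₀ nn N₁)) (repRes M₂ (RadBase k₀ nn N₂)) l m
      ≤ diagSum (repRes M₁ (RadBase k₀ nn N₁)) (repRes M₂ (RadBase k₀ nn N₂)) l m
        + 1 / (k₀ : ℝ) := by
  have hk₀0 : 0 < k₀ := by omega
  have hnn1 : 0 < nn 1 := hpos 1 le_rfl hk₀0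
  have hB₁ : 0 < SP nn N₁ k₀ := SP_pos hk₀0 nn N₁ hN₁ hnn1
  have hB₂ : 0 < SP nn N₂ k₀ := SP_pos hk₀0 nn N₂ hN₂ hnn1
  have hL₁ : (repRes M₁ (RadBase k₀ nn N₁)).length = M₁ * SP nn N₁ k₀ := RadM_length _ _ _ _
  have hL₂ : (repRes M₂ (RadBase k₀ nn N₂)).length = M₂ * SP nn N₂ k₀ := RadM_length _ _ _ _
  unfold pairSum diagSum
  simp only [RadM_get k₀ nn N₁ M₁, RadM_get k₀ nn N₂ M₂]
  have e1 : ∀ u : Fin (repRes M₁ (RadBase k₀ nn N₁)).length,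
      ∀ v : Fin (repRes M₂ (RadBase k₀ nn N₂)).length,
      (if l u = m v then (2 : ℝ) ^ ((JJ k₀ nn N₁ ((u : ℕ) % SP nn N₁ k₀) + 1) * k₀) * (1 / (((M₁ * N₁ : ℕ) : ℝ) * (nn (JJ k₀ nn N₁ ((u : ℕ) % SP nn N₁ k₀) + 1) : ℝ) * (k₀ : ℝ))) * (2 : ℝ) ^ (-(((JJ k₀ nn N₂ ((v : ℕ) % SP nn N₂ k₀) + 1) * k₀ : ℕ) : ℤ)) else 0)
        = (if l u = m v ∧ (JJ k₀ nn N₁ ((u : ℕ) % SP nn N₁ k₀) + 1) * k₀ = (JJ k₀ nn N₂ ((v : ℕ) % SP nn N₂ k₀) + 1) * k₀ then (2 : ℝ) ^ ((JJ k₀ nn N₁ ((u : ℕ) % SP nn N₁ k₀) + 1) * k₀) * (1 / (((M₁ * N₁ : ℕ) : ℝ) * (nn (JJ k₀ nn N₁ ((u : ℕ) % SP nn N₁ k₀) + 1) : ℝ) * (k₀ : ℝ))) * (2 : ℝ) ^ (-(((JJ k₀ nn N₂ ((v : ℕ) % SP nn N₂ k₀) + 1) * k₀ : ℕ) : ℤ))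 else 0)
          + ((if l u = m v ∧ (JJ k₀ nn N₁ ((u : ℕ) % SP nn N₁ k₀) + 1) * k₀ < (JJ k₀ nn N₂ ((v : ℕ) % SP nn N₂ k₀) + 1) * k₀ then (2 : ℝ) ^ ((JJ k₀ nn N₁ ((u : ℕ) % SP nn N₁ k₀) + 1) * k₀) * (1 / (((M₁ * N₁ : ℕ) : ℝ) * (nn (JJ k₀ nn N₁ ((u : ℕ) % SP nn N₁ k₀) + 1) : ℝ) * (k₀ : ℝ))) * (2 : ℝ) ^ (-(((JJ k₀ nn N₂ ((v : ℕ) % SP nn N₂ k₀) + 1) * k₀ : ℕ) : ℤ)) else 0)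
            + (if l u = m v ∧ (JJ k₀ nn N₂ ((v : ℕ) % SP nn N₂ k₀) + 1) * k₀ < (JJ k₀ nn N₁ ((u : ℕ) % SP nn N₁ k₀) + 1) * k₀ then (2 : ℝ) ^ ((JJ k₀ nn N₁ ((u : ℕ) % SP nn N₁ k₀) + 1) * k₀) * (1 / (((M₁ * N₁ : ℕ) : ℝ) * (nn (JJ k₀ nn N₁ ((u : ℕ) % SP nn N₁ k₀) + 1) : ℝ) * (k₀ : ℝ))) * (2 : ℝ) ^ (-(((JJ k₀ nn N₂ ((v : ℕ) % SP nn N₂ k₀) + 1) * k₀ : ℕ) : ℤ)) else 0)) :=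
    fun u v => ite_split (l u = m v) ((JJ k₀ nn N₁ ((u : ℕ) % SP nn N₁ k₀) + 1) * k₀) ((JJ k₀ nn N₂ ((v : ℕ) % SP nn N₂ k₀) + 1) * k₀) ((2 : ℝ) ^ ((JJ k₀ nn N₁ ((u : ℕ) % SP nn N₁ k₀) + 1) * k₀) * (1 / (((M₁ * N₁ : ℕ) : ℝ) * (nn (JJ k₀ nn N₁ ((u : ℕ) % SP nn N₁ k₀) + 1) : ℝ) * (k₀ : ℝ))) * (2 : ℝ) ^ (-(((JJ k₀ nn N₂ ((v : ℕ) % SP nn N₂ k₀) + 1) * k₀ : ℕ) : ℤ)))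
  rw [Finset.sum_congr rfl (fun u _ => Finset.sum_congr rfl (fun v _ => e1 u v))]
  simp only [Finset.sum_add_distrib]
  apply add_le_add_right
  -- the two off-diagonal sums
  have hSlt : (∑ u : Fin (repRes M₁ (RadBase k₀ nn N₁)).length,
      ∑ v : Fin (repRes M₂ (RadBase k₀ nn N₂)).length,
        if l u = m v ∧ (JJ k₀ nn N₁ ((u : ℕ) % SP nn N₁ k₀) + 1) * k₀ < (JJ k₀ nn N₂ ((v : ℕ) % SP nn N₂ k₀) + 1) * k₀ then (2 : ℝ) ^ ((JJ k₀ nn N₁ ((u : ℕ) % SP nn N₁ k₀) + 1) * k₀) * (1 / (((M₁ * N₁ : ℕ) : ℝ) * (nn (JJ k₀ nn N₁ ((u : ℕ) % SP nn N₁ k₀) + 1) : ℝ) * (k₀ : ℝ))) * (2 : ℝ) ^ (-(((JJ k₀ nn N₂ ((v : ℕ) % SP nn N₂ k₀) + 1) * k₀ : ℕ) : ℤ)) else 0)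
      ≤ 1 / (2 * (k₀ : ℝ)) := by
    have hstep : ∀ u : Fin (repRes M₁ (RadBase k₀ nn N₁)).length,
        (∑ v : Fin (repRes M₂ (RadBase k₀ nn N₂)).length,
          if l u = m v ∧ (JJ k₀ nn N₁ ((u : ℕ) % SP nn N₁ k₀) + 1) * k₀ < (JJ k₀ nn N₂ ((v : ℕ) % SP nn N₂ k₀) + 1) * k₀ then (2 : ℝ) ^ ((JJ k₀ nn N₁ ((u : ℕ) % SP nn N₁ k₀) + 1) * k₀) * (1 / (((M₁ * N₁ : ℕ) : ℝ) * (nn (JJ k₀ nn N₁ ((u : ℕ) % SP nn N₁ k₀) + 1) : ℝ) * (k₀ : ℝ))) * (2 : ℝ) ^ (-(((JJ k₀ nn N₂ ((v : ℕ) % SP nn N₂ k₀) + 1) * k₀ : ℕ) : ℤ)) else 0)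
          ≤ (2:ℝ) ^ (-(k₀ : ℤ)) * (1 / (((M₁ * N₁ : ℕ) : ℝ) * (nn (JJ k₀ nn N₁ ((u : ℕ) % SP nn N₁ k₀) + 1) : ℝ) * (k₀ : ℝ))) := by
      intro u
      have hrw : ∀ v : Fin (repRes M₂ (RadBase k₀ nn N₂)).length,
          (if l u = m v ∧ (JJ k₀ nn N₁ ((u : ℕ) % SP nn N₁ k₀) + 1) * k₀ < (JJ k₀ nn N₂ ((v : ℕ) % SP nn N₂ k₀) + 1) * k₀ then (2 : ℝ) ^ ((JJ k₀ nn N₁ ((u : ℕ) % SP nn N₁ k₀) + 1) * k₀) * (1 / (((M₁ * N₁ : ℕ) : ℝ) * (nn (JJ k₀ nn N₁ ((u : ℕ) % SP nn N₁ k₀) + 1) : ℝ) * (k₀ : ℝ))) * (2 : ℝ) ^ (-(((JJ k₀ nn N₂ ((v : ℕ) % SP nn N₂ k₀) + 1) * k₀ : ℕ) : ℤ)) else 0)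
            = (if l u = m v then (if (JJ k₀ nn N₁ ((u : ℕ) % SP nn N₁ k₀) + 1) * k₀ < (JJ k₀ nn N₂ ((v : ℕ) % SP nn N₂ k₀) + 1) * k₀ then (2 : ℝ) ^ ((JJ k₀ nn N₁ ((u : ℕ) % SP nn N₁ k₀) + 1) * k₀) * (1 / (((M₁ * N₁ : ℕ) : ℝ) * (nn (JJ k₀ nn N₁ ((u : ℕ) % SP nn N₁ k₀) + 1) : ℝ) * (k₀ : ℝ))) * (2 : ℝ) ^ (-(((JJ k₀ nn N₂ ((v : ℕ) % SP nn N₂ k₀) + 1) * k₀ : ℕ) : ℤ)) else 0) else 0) :=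
        fun v => ite_and_eq _ _ _
      rw [Finset.sum_congr rfl (fun v _ => hrw v)]
      apply sum_matched_le m hm.injective (l u) _ _ (by positivity)
      intro v _
      by_cases hlt : (JJ k₀ nn N₁ ((u : ℕ) % SP nn N₁ k₀) + 1) * k₀ < (JJ k₀ nn N₂ ((v : ℕ) % SP nn N₂ k₀) + 1) * k₀
      · rw [if_pos hlt]
        apply X_le k₀ _ _ _ (by positivity)
        have h6 : JJ k₀ nn N₁ ((u : ℕ) % SP nn N₁ k₀) + 1
            < JJ k₀ nn N₂ ((v : ℕ) % SP nn N₂ k₀) + 1 :=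
          lt_of_mul_lt_mul_right hlt (Nat.zero_le _)
        have h7 : (JJ k₀ nn N₁ ((u : ℕ) % SP nn N₁ k₀) + 2) * k₀
            ≤ (JJ k₀ nn N₂ ((v : ℕ) % SP nn N₂ k₀) + 1) * k₀ :=
          Nat.mul_le_mul_right _ (by omega)
        have h8 : (JJ k₀ nn N₁ ((u : ℕ) % SP nn N₁ k₀) + 2) * k₀
            = (JJ k₀ nn N₁ ((u : ℕ) % SP nn N₁ k₀) + 1) * k₀ + k₀ := by ring
        omega
      · rw [if_neg hlt]
        positivity
    calc (∑ u : Fin (repRes M₁ (RadBase k₀ nn N₁)).length,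
        ∑ v : Fin (repRes M₂ (RadBase k₀ nn N₂)).length,
          if l u = m v ∧ (JJ k₀ nn N₁ ((u : ℕ) % SP nn N₁ k₀) + 1) * k₀ < (JJ k₀ nn N₂ ((v : ℕ) % SP nn N₂ k₀) + 1) * k₀ then (2 : ℝ) ^ ((JJ k₀ nn N₁ ((u : ℕ) % SP nn N₁ k₀) + 1) * k₀) * (1 / (((M₁ * N₁ : ℕ) : ℝ) * (nn (JJ k₀ nn N₁ ((u : ℕ) % SP nn N₁ k₀) + 1) : ℝ) * (k₀ : ℝ))) * (2 : ℝ) ^ (-(((JJ k₀ nn N₂ ((v : ℕ) % SP nn N₂ k₀) + 1) * k₀ : ℕ) : ℤ)) else 0)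
        ≤ ∑ u : Fin (repRes M₁ (RadBase k₀ nn N₁)).length,
            (2:ℝ) ^ (-(k₀ : ℤ)) * (1 / (((M₁ * N₁ : ℕ) : ℝ) * (nn (JJ k₀ nn N₁ ((u : ℕ) % SP nn N₁ k₀) + 1) : ℝ) * (k₀ : ℝ))) := Finset.sum_le_sum (fun u _ => hstep u)
      _ = (2:ℝ) ^ (-(k₀ : ℤ)) * ∑ u : Fin (repRes M₁ (RadBase k₀ nn N₁)).length, (1 / (((M₁ * N₁ : ℕ) : ℝ) * (nn (JJ k₀ nn N₁ ((u : ℕ) % SP nn N₁ k₀) + 1) : ℝ) * (k₀ : ℝ))) := by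
          rw [Finset.mul_sum]
      _ ≤ (2:ℝ) ^ (-(k₀ : ℤ)) * 1 := by
          apply mul_le_mul_of_nonneg_left _ (by positivity)
          exact sum_alpha k₀ hk₀0 nn hpos N₁ M₁ _ (le_of_eq hL₁) hB₁ hM₁ hN₁
      _ ≤ 1 / (2 * (k₀ : ℝ)) := by
          rw [mul_one]
          exact two_zpow_le_inv_two_mul hk₀
  have hSgt : (∑ u : Fin (repRes M₁ (RadBase k₀ nn N₁)).length,
      ∑ v : Fin (repRes M₂ (RadBase k₀ nn N₂)).length,
        if l u = m v ∧ (JJ k₀ nn N₂ ((v : ℕ) % SP nn N₂ k₀) + 1) * k₀ < (JJ k₀ nn N₁ ((u : ℕ) % SP nn N₁ k₀) + 1) * k₀ then (2 : ℝ) ^ ((JJ k₀ nn N₁ ((u : ℕ) % SP nn N₁ k₀) + 1) * k₀) * (1 / (((M₁ * N₁ : ℕ) : ℝ) * (nn (JJ k₀ nn N₁ ((u : ℕ) % SP nn N₁ k₀) + 1) : ℝ) * (k₀ : ℝ))) * (2 : ℝ) ^ (-(((JJ k₀ nn N₂ ((v : ℕ) % SP nn N₂ k₀) + 1) * k₀ :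 ℕ) : ℤ)) else 0)
      ≤ 1 / (2 * (k₀ : ℝ)) := by
    rw [Finset.sum_comm]
    have hstep : ∀ v : Fin (repRes M₂ (RadBase k₀ nn N₂)).length,
        (∑ u : Fin (repRes M₁ (RadBase k₀ nn N₁)).length,
          if l u = m v ∧ (JJ k₀ nn N₂ ((v : ℕ) % SP nn N₂ k₀) + 1) * k₀ < (JJ k₀ nn N₁ ((u : ℕ) % SP nn N₁ k₀) + 1) * k₀ then (2 : ℝ) ^ ((JJ k₀ nn N₁ ((u : ℕ) % SP nn N₁ k₀) + 1) * k₀) * (1 / (((M₁ * N₁ : ℕ) : ℝ) * (nn (JJ k₀ nn N₁ ((u : ℕ) % SP nn N₁ k₀) + 1) : ℝ) * (k₀ : ℝ))) * (2 : ℝ) ^ (-(((JJ k₀ nn N₂ ((v : ℕ) % SP nn N₂ k₀) + 1) * k₀ : ℕ) : ℤ)) else 0)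
          ≤ gb k₀ nn (M₁ * N₁) (JJ k₀ nn N₂ ((v : ℕ) % SP nn N₂ k₀) + 1) := by
      intro v
      have hrw : ∀ u : Fin (repRes M₁ (RadBase k₀ nn N₁)).length,
          (if l u = m v ∧ (JJ k₀ nn N₂ ((v : ℕ) % SP nn N₂ k₀) + 1) * k₀ < (JJ k₀ nn N₁ ((u : ℕ) % SP nn N₁ k₀) + 1) * k₀ then (2 : ℝ) ^ ((JJ k₀ nn N₁ ((u : ℕ) % SP nn N₁ k₀) + 1) * k₀) * (1 / (((M₁ * N₁ : ℕ) : ℝ) * (nn (JJ k₀ nn N₁ ((u : ℕ) % SP nn N₁ k₀) + 1) : ℝ) * (k₀ : ℝ))) * (2 : ℝ) ^ (-(((JJ k₀ nn N₂ ((v : ℕ) % SP nn N₂ k₀) + 1) * k₀ : ℕ) : ℤ)) else 0)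
            = (if l u = m v then (if (JJ k₀ nn N₂ ((v : ℕ) % SP nn N₂ k₀) + 1) * k₀ < (JJ k₀ nn N₁ ((u : ℕ) % SP nn N₁ k₀) + 1) * k₀ then (2 : ℝ) ^ ((JJ k₀ nn N₁ ((u : ℕ) % SP nn N₁ k₀) + 1) * k₀) * (1 / (((M₁ * N₁ : ℕ) : ℝ) * (nn (JJ k₀ nn N₁ ((u : ℕ) % SP nn N₁ k₀) + 1) : ℝ) * (k₀ : ℝ))) * (2 : ℝ) ^ (-(((JJ k₀ nn N₂ ((v : ℕ) % SP nn N₂ k₀) + 1) * k₀ : ℕ) : ℤ)) else 0) else 0) :=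
        fun u => ite_and_eq _ _ _
      rw [Finset.sum_congr rfl (fun u _ => hrw u)]
      apply sum_matched_le' l hl.injective (m v) _ _ (gb_nonneg _ _ _ _)
      intro u _
      by_cases hlt : (JJ k₀ nn N₂ ((v : ℕ) % SP nn N₂ k₀) + 1) * k₀ < (JJ k₀ nn N₁ ((u : ℕ) % SP nn N₁ k₀) + 1) * k₀
      · rw [if_pos hlt]
        unfold gb
        have h6 : JJ k₀ nn N₂ ((v : ℕ) % SP nn N₂ k₀) + 1
            < JJ k₀ nn N₁ ((u : ℕ) % SP nn N₁ k₀) + 1 :=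
          lt_of_mul_lt_mul_right hlt (Nat.zero_le _)
        have h7 : JJ k₀ nn N₁ ((u : ℕ) % SP nn N₁ k₀) < k₀ :=
          JJ_lt hk₀0 nn N₁ _ (Nat.mod_lt _ hB₁)
        apply Finset.single_le_sum (f := fun j =>
            (2:ℝ) ^ (j * k₀)
              * (1 / (((M₁ * N₁ : ℕ) : ℝ) * (nn j : ℝ) * (k₀ : ℝ)))
              * (2:ℝ) ^ (-(((JJ k₀ nn N₂ ((v : ℕ) % SP nn N₂ k₀) + 1) * k₀ : ℕ) : ℤ)))
          (fun j _ => by positivity)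
          (Finset.mem_Icc.mpr ⟨by omega, by omega⟩)
      · rw [if_neg hlt]
        exact gb_nonneg _ _ _ _
    calc (∑ v : Fin (repRes M₂ (RadBase k₀ nn N₂)).length,
        ∑ u : Fin (repRes M₁ (RadBase k₀ nn N₁)).length,
          if l u = m v ∧ (JJ k₀ nn N₂ ((v : ℕ) % SP nn N₂ k₀) + 1) * k₀ < (JJ k₀ nn N₁ ((u : ℕ) % SP nn N₁ k₀) + 1) * k₀ then (2 : ℝ) ^ ((JJ k₀ nn N₁ ((u : ℕ) % SP nn N₁ k₀) + 1) * k₀) * (1 / (((M₁ * N₁ : ℕ) : ℝ) * (nn (JJ k₀ nn N₁ ((u : ℕ) % SP nn N₁ k₀) + 1) : ℝ) * (k₀ : ℝ))) * (2 : ℝ) ^ (-(((JJ k₀ nn N₂ ((v : ℕ) % SP nn N₂ k₀) + 1) * k₀ : ℕ) : ℤ)) else 0)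
        ≤ ∑ v : Fin (repRes M₂ (RadBase k₀ nn N₂)).length,
            gb k₀ nn (M₁ * N₁) (JJ k₀ nn N₂ ((v : ℕ) % SP nn N₂ k₀) + 1) :=
          Finset.sum_le_sum (fun v _ => hstep v)
      _ ≤ ∑ j' ∈ Finset.range k₀,
            ((M₂ * (N₂ * nn (j' + 1)) : ℕ) : ℝ) * gb k₀ nn (M₁ * N₁) (j' + 1) := by
          have hmaps : ∀ v : Fin (repRes M₂ (RadBase k₀ nn N₂)).length, v ∈ Finset.univ →
              JJ k₀ nn N₂ ((v : ℕ) % SP nn N₂ k₀) ∈ Finset.range k₀ := fun v _ =>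
            Finset.mem_range.2 (JJ_lt hk₀0 nn N₂ _ (Nat.mod_lt _ hB₂))
          rw [← Finset.sum_fiberwise_of_maps_to hmaps
            (fun v => gb k₀ nn (M₁ * N₁) (JJ k₀ nn N₂ ((v : ℕ) % SP nn N₂ k₀) + 1))]
          apply Finset.sum_le_sum
          intro j' hj'
          have hconst : ∀ v ∈ Finset.univ.filter
              (fun v : Fin (repRes M₂ (RadBase k₀ nn N₂)).length =>
                JJ k₀ nn N₂ ((v : ℕ) % SP nn N₂ k₀) = j'),
              gb k₀ nn (M₁ * N₁) (JJ k₀ nn N₂ ((v : ℕ) % SP nn N₂ k₀) + 1)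
                = gb k₀ nn (M₁ * N₁) (j' + 1) := by
            intro v hv
            rw [(Finset.mem_filter.1 hv).2]
          rw [Finset.sum_congr rfl hconst, Finset.sum_const, nsmul_eq_mul]
          apply mul_le_mul_of_nonneg_right _ (gb_nonneg _ _ _ _)
          have hcard := count_c k₀ hk₀0 nn N₂ M₂ _ (le_of_eq hL₂) hB₂ j'
          exact_mod_cast hcard
      _ ≤ 1 / (2 * (k₀ : ℝ)) :=
          gb_total k k₀ hk₀ hsq nn hpos hratio M₁ N₁ M₂ N₂ hM₂ hN₂ hT
  have hkr : (k₀ : ℝ) ≠ 0 := Nat.cast_ne_zero.mpr (by omega)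
  have hhalf : 1 / (2 * (k₀ : ℝ)) + 1 / (2 * (k₀ : ℝ)) = 1 / (k₀ : ℝ) := by
    rw [← add_div, div_eq_div_iff (mul_ne_zero two_ne_zero hkr) hkr]
    ring
  linarith [hSlt, hSgt]

/-! ### bra-level bounds and the main theorem -/

lemma coeff_le_two_div (k₀ : ℕ) (hk₀0 : 0 < k₀) (M₁ N₁ M₂ N₂ : ℕ)
    (hM₁ : 0 < M₁) (hN₁ : 0 < N₁) (hM₂ : 0 < M₂) (hN₂ : 0 < N₂)
    (hT : M₁ * N₁ = M₂ * N₂) (hfine : k₀ * N₂ ≤ N₁) :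
    ((M₂ : ℝ) + ((M₁ * k₀ : ℕ) : ℝ)) * ((N₂ : ℝ) / (((M₂ * N₂ : ℕ) : ℝ) * (k₀ : ℝ)))
      ≤ 2 / (k₀ : ℝ) := by
  have hd : (0 : ℝ) < ((M₂ * N₂ : ℕ) : ℝ) * (k₀ : ℝ) := by
    have h := Nat.mul_pos (Nat.mul_pos hM₂ hN₂) hk₀0
    exact_mod_cast h
  have hk₀r : (0 : ℝ) < (k₀ : ℝ) := by exact_mod_cast hk₀0
  rw [mul_div_assoc', div_le_div_iff₀ hd hk₀r]
  have h1 : M₁ * k₀ * N₂ ≤ M₂ * N₂ := by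
    calc M₁ * k₀ * N₂ = M₁ * (k₀ * N₂) := by ring
      _ ≤ M₁ * N₁ := Nat.mul_le_mul_left _ hfine
      _ = M₂ * N₂ := hT
  have hnat : (M₂ + M₁ * k₀) * N₂ * k₀ ≤ 2 * (M₂ * N₂ * k₀) := by
    have h2 : (M₂ + M₁ * k₀) * N₂ = M₂ * N₂ + M₁ * k₀ * N₂ := by ring
    have h3 : (M₂ + M₁ * k₀) * N₂ ≤ 2 * (M₂ * N₂) := by omega
    calc (M₂ + M₁ * k₀) * N₂ * k₀ ≤ 2 * (M₂ * N₂) * k₀ := Nat.mul_le_mul_right _ h3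
      _ = 2 * (M₂ * N₂ * k₀) := by ring
  have hr : (((M₂ + M₁ * k₀) * N₂ * k₀ : ℕ) : ℝ) ≤ ((2 * (M₂ * N₂ * k₀) : ℕ) : ℝ) :=
    Nat.cast_le.mpr hnat
  push_cast at hr ⊢
  linarith

lemma coeff_self (k₀ : ℕ) (hk₀0 : 0 < k₀) (M N : ℕ) (hM : 0 < M) (hN : 0 < N) :
    ((M : ℝ) + ((M * k₀ : ℕ) : ℝ)) * ((N : ℝ) / (((M * N : ℕ) : ℝ) * (k₀ : ℝ)))
      ≤ 1 + 1 / (k₀ : ℝ) := by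
  have hd : (0 : ℝ) < ((M * N : ℕ) : ℝ) * (k₀ : ℝ) := by
    have h := Nat.mul_pos (Nat.mul_pos hM hN) hk₀0
    exact_mod_cast h
  have hk₀r : (0 : ℝ) < (k₀ : ℝ) := by exact_mod_cast hk₀0
  have h1 : 1 + 1 / (k₀ : ℝ) = ((k₀ + 1 : ℕ) : ℝ) / (k₀ : ℝ) := by
    push_cast
    field_simp
  rw [h1, mul_div_assoc', div_le_div_iff₀ hd hk₀r]
  have hnat : (M + M * k₀) * N * k₀ = (k₀ + 1) * (M * N * k₀) := by ring
  have hr : (((M + M * k₀) * N * k₀ : ℕ) : ℝ) = (((k₀ + 1) * (M * N * k₀) : ℕ) : ℝ) := by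
    rw [hnat]
  push_cast at hr ⊢
  linarith

lemma bra_le_offdiag (k k₀ : ℕ) (nn : ℕ → ℕ)
    (hk₀ : 2 ≤ k₀) (hsq : k₀ * k₀ ≤ k)
    (hpos : ∀ j, 1 ≤ j → j ≤ k₀ → 0 < nn j)
    (hratio : ∑ j ∈ Finset.Icc 1 k₀, ∑ j' ∈ Finset.Icc 1 k₀,
      (if j < j' then (nn j : ℝ) / (nn j' : ℝ) else 0) < (2 : ℝ) ^ (-(k : ℤ)))
    (M₁ N₁ M₂ N₂ : ℕ) (hM₁ : 0 < M₁) (hN₁ : 0 < N₁) (hM₂ : 0 < M₂) (hN₂ : 0 < N₂)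
    (hT : M₁ * N₁ = M₂ * N₂) (hfine : k₀ * N₂ ≤ N₁) :
    bra (repRes M₁ (RadBase k₀ nn N₁)) (repRes M₂ (RadBase k₀ nn N₂)) ≤ 3 / (k₀ : ℝ)
      ∧ bra (repRes M₂ (RadBase k₀ nn N₂)) (repRes M₁ (RadBase k₀ nn N₁)) ≤ 3 / (k₀ : ℝ) := by
  have hk₀0 : 0 < k₀ := by omega
  have hk₀r : (0 : ℝ) < (k₀ : ℝ) := by exact_mod_cast hk₀0
  have hkey := coeff_le_two_div k₀ hk₀0 M₁ N₁ M₂ N₂ hM₁ hN₁ hM₂ hN₂ hT hfine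
  have h23 : 2 / (k₀ : ℝ) + 1 / (k₀ : ℝ) = 3 / (k₀ : ℝ) := by
    rw [← add_div]
    norm_num
  constructor
  · apply Real.sSup_le _ (by positivity)
    rintro t ⟨l, m, hl, hm, rfl⟩
    calc pairSum (repRes M₁ (RadBase k₀ nn N₁)) (repRes M₂ (RadBase k₀ nn N₂)) l m
        ≤ diagSum (repRes M₁ (RadBase k₀ nn N₁)) (repRes M₂ (RadBase k₀ nn N₂)) l m
            + 1 / (k₀ : ℝ) :=
          pairSum_le k k₀ nn hk₀ hsq hpos hratio M₁ N₁ M₂ N₂ hM₁ hN₁ hM₂ hN₂ hT l m hl hm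
      _ ≤ ((M₂ : ℝ) + ((M₁ * k₀ : ℕ) : ℝ))
            * ((N₂ : ℝ) / (((M₂ * N₂ : ℕ) : ℝ) * (k₀ : ℝ))) + 1 / (k₀ : ℝ) :=
          add_le_add_left
            (diagSum_le k₀ hk₀0 nn hpos M₁ N₁ M₂ N₂ hM₁ hN₁ hM₂ hN₂ hT l m hl hm) _
      _ ≤ 2 / (k₀ : ℝ) + 1 / (k₀ : ℝ) := add_le_add_left hkey _
      _ = 3 / (k₀ : ℝ) := h23
  · apply Real.sSup_le _ (by positivity)
    rintro t ⟨l, m, hl, hm, rfl⟩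
    calc pairSum (repRes M₂ (RadBase k₀ nn N₂)) (repRes M₁ (RadBase k₀ nn N₁)) l m
        ≤ diagSum (repRes M₂ (RadBase k₀ nn N₂)) (repRes M₁ (RadBase k₀ nn N₁)) l m
            + 1 / (k₀ : ℝ) :=
          pairSum_le k k₀ nn hk₀ hsq hpos hratio M₂ N₂ M₁ N₁ hM₂ hN₂ hM₁ hN₁ hT.symm l m hl hm
      _ = diagSum (repRes M₁ (RadBase k₀ nn N₁)) (repRes M₂ (RadBase k₀ nn N₂)) m l
            + 1 / (k₀ : ℝ) := by
          rw [diagSum_comm k₀ hk₀0 nn M₂ N₂ M₁ N₁ hT.symm l m]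
      _ ≤ ((M₂ : ℝ) + ((M₁ * k₀ : ℕ) : ℝ))
            * ((N₂ : ℝ) / (((M₂ * N₂ : ℕ) : ℝ) * (k₀ : ℝ))) + 1 / (k₀ : ℝ) :=
          add_le_add_left
            (diagSum_le k₀ hk₀0 nn hpos M₁ N₁ M₂ N₂ hM₁ hN₁ hM₂ hN₂ hT m l hm hl) _
      _ ≤ 2 / (k₀ : ℝ) + 1 / (k₀ : ℝ) := add_le_add_left hkey _
      _ = 3 / (k₀ : ℝ) := h23

lemma bra_le_diag (k k₀ : ℕ) (nn : ℕ → ℕ)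
    (hk₀ : 2 ≤ k₀) (hsq : k₀ * k₀ ≤ k)
    (hpos : ∀ j, 1 ≤ j → j ≤ k₀ → 0 < nn j)
    (hratio : ∑ j ∈ Finset.Icc 1 k₀, ∑ j' ∈ Finset.Icc 1 k₀,
      (if j < j' then (nn j : ℝ) / (nn j' : ℝ) else 0) < (2 : ℝ) ^ (-(k : ℤ)))
    (M N : ℕ) (hM : 0 < M) (hN : 0 < N) :
    bra (repRes M (RadBase k₀ nn N)) (repRes M (RadBase k₀ nn N))
      ≤ 1 + 2 / (k₀ : ℝ) := by
  have hk₀0 : 0 < k₀ := by omega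
  have hk₀r : (0 : ℝ) < (k₀ : ℝ) := by exact_mod_cast hk₀0
  apply Real.sSup_le _ (by positivity)
  rintro t ⟨l, m, hl, hm, rfl⟩
  have h1 : 1 + 1 / (k₀ : ℝ) + 1 / (k₀ : ℝ) = 1 + 2 / (k₀ : ℝ) := by
    rw [add_assoc, ← add_div]
    norm_num
  calc pairSum (repRes M (RadBase k₀ nn N)) (repRes M (RadBase k₀ nn N)) l m
      ≤ diagSum (repRes M (RadBase k₀ nn N)) (repRes M (RadBase k₀ nn N)) l m
          + 1 / (k₀ : ℝ) :=
        pairSum_le k k₀ nn hk₀ hsq hpos hratio M N M N hM hN hM hN rfl l m hl hm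
    _ ≤ ((M : ℝ) + ((M * k₀ : ℕ) : ℝ)) * ((N : ℝ) / (((M * N : ℕ) : ℝ) * (k₀ : ℝ)))
          + 1 / (k₀ : ℝ) :=
        add_le_add_left (diagSum_le k₀ hk₀0 nn hpos M N M N hM hN hM hN rfl l m hl hm) _
    _ ≤ 1 + 1 / (k₀ : ℝ) + 1 / (k₀ : ℝ) :=
        add_le_add_left (coeff_self k₀ hk₀0 M N hM hN) _
    _ = 1 + 2 / (k₀ : ℝ) := h1

lemma angled_comm (r s : Res) : angled r s = angled s r := max_comm _ _

end RadProof

/-- For `k ≥ 4`, `k₀ = ⌊√k⌋` and `n₁ < ⋯ < n_{k₀}` with `∑_{j<j'} n_j/n_{j'} < 2^{-k}`,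
the Rademachers `R_{n·k₀^{m-l}, l}`, `l = 1,…,m`, are pairwise `5/k₀`-orthogonal, and
each satisfies `⟨R, R⟩ ≤ 1 + 2/k₀`. -/
theorem rademacher_orthogonality (k : ℕ) (hk : 4 ≤ k) (k₀ : ℕ) (hk₀ : k₀ = Nat.sqrt k)
    (nn : ℕ → ℕ)
    (hpos : ∀ j, 1 ≤ j → j ≤ k₀ → 0 < nn j)
    (hmono : ∀ j j', 1 ≤ j → j < j' → j' ≤ k₀ → nn j < nn j')
    (hratio : ∑ j ∈ Finset.Icc 1 k₀, ∑ j' ∈ Finset.Icc 1 k₀,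
      (if j < j' then (nn j : ℝ) / (nn j' : ℝ) else 0) < (2 : ℝ) ^ (-(k : ℤ)))
    (m n : ℕ) (hn : 0 < n) :
    (∀ l l', 1 ≤ l → l ≤ m → 1 ≤ l' → l' ≤ m → l ≠ l' →
      angled (Rademacher k₀ nn (n * k₀ ^ (m - l)) l)
             (Rademacher k₀ nn (n * k₀ ^ (m - l')) l') < 5 / (k₀ : ℝ)) ∧
    (∀ l, 1 ≤ l → l ≤ m →
      angled (Rademacher k₀ nn (n * k₀ ^ (m - l)) l)
             (Rademacher k₀ nn (n * k₀ ^ (m - l)) l) ≤ 1 + 2 / (k₀ : ℝ)) := by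
  have hk₀2 : 2 ≤ k₀ := by
    rw [hk₀]
    exact Nat.le_sqrt.mpr (by omega)
  have hsq : k₀ * k₀ ≤ k := by
    rw [hk₀]
    have h := Nat.sqrt_le' k
    rwa [pow_two] at h
  have hk₀0 : 0 < k₀ := by omega
  have hk₀r : (0 : ℝ) < (k₀ : ℝ) := by exact_mod_cast hk₀0
  have h35 : 3 / (k₀ : ℝ) < 5 / (k₀ : ℝ) := by
    rw [div_lt_div_iff₀ hk₀r hk₀r]
    nlinarith [hk₀r]
  have main : ∀ a b, 1 ≤ a → a ≤ m → 1 ≤ b → b ≤ m → a < b →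
      angled (Rademacher k₀ nn (n * k₀ ^ (m - a)) a)
             (Rademacher k₀ nn (n * k₀ ^ (m - b)) b) < 5 / (k₀ : ℝ) := by
    intro a b h1a ham h1b hbm hab
    have hT : k₀ ^ (a - 1) * (n * k₀ ^ (m - a)) = k₀ ^ (b - 1) * (n * k₀ ^ (m - b)) := by
      calc k₀ ^ (a - 1) * (n * k₀ ^ (m - a)) = n * k₀ ^ ((m - a) + (a - 1)) := by
            rw [pow_add]; ring
        _ = n * k₀ ^ ((m - b) + (b - 1)) := by
            congr 2
            omega
        _ = k₀ ^ (b - 1) * (n * k₀ ^ (m - b)) := by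
            rw [pow_add]; ring
    have hfine : k₀ * (n * k₀ ^ (m - b)) ≤ n * k₀ ^ (m - a) := by
      calc k₀ * (n * k₀ ^ (m - b)) = n * k₀ ^ ((m - b) + 1) := by rw [pow_succ]; ring
        _ ≤ n * k₀ ^ (m - a) :=
          Nat.mul_le_mul_left _ (Nat.pow_le_pow_right hk₀0 (by omega))
    have hM₁ : 0 < k₀ ^ (a - 1) := Nat.pow_pos hk₀0
    have hM₂ : 0 < k₀ ^ (b - 1) := Nat.pow_pos hk₀0
    have hN₁ : 0 < n * k₀ ^ (m - a) := Nat.mul_pos hn (Nat.pow_pos hk₀0)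
    have hN₂ : 0 < n * k₀ ^ (m - b) := Nat.mul_pos hn (Nat.pow_pos hk₀0)
    have hbra := RadProof.bra_le_offdiag k k₀ nn hk₀2 hsq hpos hratio
      (k₀ ^ (a - 1)) (n * k₀ ^ (m - a)) (k₀ ^ (b - 1)) (n * k₀ ^ (m - b))
      hM₁ hN₁ hM₂ hN₂ hT hfine
    show max _ _ < 5 / (k₀ : ℝ)
    exact max_lt (lt_of_le_of_lt hbra.1 h35) (lt_of_le_of_lt hbra.2 h35)
  constructor
  · intro l l' h1l hlm h1l' hl'm hne
    rcases Nat.lt_or_ge l l' with hlt | hge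
    · exact main l l' h1l hlm h1l' hl'm hlt
    · have hlt : l' < l := by omega
      rw [RadProof.angled_comm]
      exact main l' l h1l' hl'm h1l hlm hlt
  · intro l h1l hlm
    have hM : 0 < k₀ ^ (l - 1) := Nat.pow_pos hk₀0
    have hN : 0 < n * k₀ ^ (m - l) := Nat.mul_pos hn (Nat.pow_pos hk₀0)
    have hbra := RadProof.bra_le_diag k k₀ nn hk₀2 hsq hpos hratio
      (k₀ ^ (l - 1)) (n * k₀ ^ (m - l)) hM hN
    show max _ _ ≤ 1 + 2 / (k₀ : ℝ)
    exact max_le hbra hbra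

end
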